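/- Let V be a finite-dimensional inner product space, E: V → ℝ ∪ {∞} convex, P: V → V an orthogonal projection, η > 0, and λ ∈ V with λ ⊥ ker(I − P) (i.e. λ ∈ (range P)ᗮ). If u⁺ minimizes u ↦ E(u) + ⟨u, λ⟩ + (η/2)‖u − Pw‖² over V for a given w ∈ V, then for all u ∈ V: E(u) ≥ E(u⁺) + ⟨(I − P)(u⁺ − u), λ⟩ + η⟨u⁺ − Pw, u⁺ − u⟩. -/

import Mathlib

open scoped RealInnerProductSpace

/-- Lemma 3 (characterization of the u-update): if `λ ⊥ ker(I − P)` and `u⁺` minimizes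
`u ↦ E u + ⟨u, λ⟩ + (η/2)‖u − P w‖²`, then for all `u`,
`E u ≥ E u⁺ + ⟨(I − P)(u⁺ − u), λ⟩ + η⟨u⁺ − P w, u⁺ − u⟩`. -/
theorem stmt_2 {V : Type*} [NormedAddCommGroup V] [InnerProductSpace ℝ V]
    [FiniteDimensional ℝ V] (E : V → EReal)
    (hbot : ∀ x : V, E x ≠ ⊥)
    (hE : ∀ x y : V, ∀ a b : ℝ, 0 ≤ a → 0 ≤ b → a + b = 1 →
      E (a • x + b • y) ≤ (a : EReal) * E x + (b : EReal) * E y)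
    (P : V →ₗ[ℝ] V) (hidem : P ∘ₗ P = P)
    (hsym : ∀ x y : V, ⟪P x, y⟫ = ⟪x, P y⟫)
    (η : ℝ) (hη : 0 < η) (lam : V)
    (hlam : lam ∈ (LinearMap.ker (LinearMap.id - P))ᗮ)
    (w : V) (uplus : V)
    (hmin : ∀ u : V,
      E uplus + ((⟪uplus, lam⟫ + η / 2 * ‖uplus - P w‖ ^ 2 : ℝ) : EReal)
        ≤ E u + ((⟪u, lam⟫ + η / 2 * ‖u - P w‖ ^ 2 : ℝ) : EReal)) :
    ∀ u : V,
      E uplus + ((⟪(uplus - u) - P (uplus - u), lam⟫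
        + η * ⟪uplus - P w, uplus - u⟫ : ℝ) : EReal) ≤ E u := by
  intro u
  by_cases hu : E u = ⊤
  · rw [hu]; exact le_top
  -- lam is orthogonal to the range of P
  have hP0 : ∀ x : V, ⟪P x, lam⟫ = 0 := by
    intro x
    have hx : P x ∈ LinearMap.ker (LinearMap.id - P) := by
      have := LinearMap.congr_fun hidem x
      simp only [LinearMap.mem_ker, LinearMap.sub_apply, LinearMap.id_apply]
      rw [show P (P x) = P x from this] at *
      simp [this]
    exact (Submodule.mem_orthogonal _ lam).mp hlam _ hx
  have hlin : ⟪(uplus - u) - P (uplus - u), lam⟫ = ⟪uplus - u, lam⟫ := by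
    rw [inner_sub_left, hP0]; ring
  -- E uplus is finite
  have hup : E uplus ≠ ⊤ := by
    intro h
    have h2 := hmin u
    rw [h, EReal.top_add_coe] at h2
    have h3 : E u + ((⟪u, lam⟫ + η / 2 * ‖u - P w‖ ^ 2 : ℝ) : EReal) = ⊤ :=
      top_le_iff.mp h2
    rw [← EReal.coe_toReal hu (hbot u), ← EReal.coe_add] at h3
    exact EReal.coe_ne_top _ h3
  set a : ℝ := (E uplus).toReal with hadef
  set b : ℝ := (E u).toReal with hbdef
  have ha : (a : EReal) = E uplus := EReal.coe_toReal hup (hbot _)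
  have hb : (b : EReal) = E u := EReal.coe_toReal hu (hbot _)
  set c : ℝ := ⟪uplus - u, lam⟫ + η * ⟪uplus - P w, uplus - u⟫ with hcdef
  set C : ℝ := η / 2 * ‖u - uplus‖ ^ 2 with hCdef
  have hC0 : 0 ≤ C := by positivity
  have hkey : ∀ t : ℝ, 0 < t → t ≤ 1 → a + c ≤ b + t * C := by
    intro t ht ht1
    set ut := uplus + t • (u - uplus) with hut
    have hco : (1 - t) • uplus + t • u = ut := by
      rw [hut]; module
    have hconv := hE uplus u (1 - t) t (by linarith) ht.le (by ring)
    rw [hco, ← ha, ← hb] at hconv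
    have hconv' : E ut ≤ (((1 - t) * a + t * b : ℝ) : EReal) := by
      push_cast [EReal.coe_mul]
      exact hconv
    have hmin' := hmin ut
    have hchain : ((a + (⟪uplus, lam⟫ + η / 2 * ‖uplus - P w‖ ^ 2) : ℝ) : EReal)
        ≤ ((((1 - t) * a + t * b) + (⟪ut, lam⟫ + η / 2 * ‖ut - P w‖ ^ 2) : ℝ) : EReal) := by
      push_cast
      calc (a : EReal) + ((⟪uplus, lam⟫ + η / 2 * ‖uplus - P w‖ ^ 2 : ℝ) : EReal)
          ≤ E ut + ((⟪ut, lam⟫ + η / 2 * ‖ut - P w‖ ^ 2 : ℝ) : EReal) := by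
            rw [ha]; exact hmin'
        _ ≤ (((1 - t) * a + t * b : ℝ) : EReal)
            + ((⟪ut, lam⟫ + η / 2 * ‖ut - P w‖ ^ 2 : ℝ) : EReal) :=
            add_le_add_left hconv' _
        _ = _ := by push_cast [EReal.coe_mul]; ring
    have hreal : a + (⟪uplus, lam⟫ + η / 2 * ‖uplus - P w‖ ^ 2)
        ≤ ((1 - t) * a + t * b) + (⟪ut, lam⟫ + η / 2 * ‖ut - P w‖ ^ 2) :=
      EReal.coe_le_coe_iff.mp hchain
    have hinner : ⟪ut, lam⟫ = ⟪uplus, lam⟫ + t * ⟪u - uplus, lam⟫ := by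
      rw [hut, inner_add_left, real_inner_smul_left]
    have hdecomp : ut - P w = (uplus - P w) + t • (u - uplus) := by
      rw [hut]; module
    have hnorm : ‖ut - P w‖ ^ 2 = ‖uplus - P w‖ ^ 2
        + 2 * (t * ⟪uplus - P w, u - uplus⟫) + t ^ 2 * ‖u - uplus‖ ^ 2 := by
      rw [hdecomp, @norm_add_sq_real, real_inner_smul_right, norm_smul]
      simp [Real.norm_eq_abs, mul_pow, sq_abs]
    have h1 : ⟪uplus - u, lam⟫ = -⟪u - uplus, lam⟫ := by
      rw [← neg_sub, inner_neg_left]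
    have h2 : ⟪uplus - P w, uplus - u⟫ = -⟪uplus - P w, u - uplus⟫ := by
      rw [← neg_sub u uplus, inner_neg_right]
    rw [hinner, hnorm] at hreal
    have hdiv : t * (a + c) ≤ t * (b + t * C) := by
      rw [hcdef, hCdef, h1, h2]; nlinarith [hreal]
    exact le_of_mul_le_mul_left hdiv ht
  have hfin : a + c ≤ b := by
    by_contra h
    push_neg at h
    set ε : ℝ := a + c - b with hε
    have hε0 : 0 < ε := by linarith
    set t : ℝ := min 1 (ε / (2 * (C + 1))) with htd
    have ht : 0 < t := lt_min one_pos (by positivity)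
    have hkt := hkey t ht (min_le_left _ _)
    have htle : t ≤ ε / (2 * (C + 1)) := min_le_right _ _
    have htC : t * C ≤ ε / 2 := by
      have h3 : t * C ≤ ε / (2 * (C + 1)) * C :=
        mul_le_mul_of_nonneg_right htle hC0
      have h4 : ε / (2 * (C + 1)) * C ≤ ε / 2 := by
        rw [div_mul_eq_mul_div, div_le_div_iff₀ (by positivity) (by positivity)]
        nlinarith
      linarith
    linarith
  rw [hlin, ← ha, ← hb, ← hcdef, ← EReal.coe_add]
  exact EReal.coe_le_coe_iff.mpr hfin
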